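/- Let k_1,…,k_n be positive integers. Then ζ⋆_𝒜(k_n,…,k_1) = (−1)^{k_1+⋯+k_n} · ζ⋆_𝒜(k_1,…,k_n) in 𝒜. -/

import Mathlib

open scoped BigOperators

/-- The product of `ℤ/pℤ` over all primes `p`. -/
abbrev PreA : Type := ∀ p : Nat.Primes, ZMod p

/-- The ideal of families that vanish for all but finitely many primes. -/
def nullIdeal : Ideal PreA where
  carrier := {f | {p | f p ≠ 0}.Finite}
  zero_mem' := by simp
  add_mem' := by
    intro f g hf hg
    refine (hf.union hg).subset fun p hp => ?_
    by_contra hc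
    simp only [Set.mem_union, Set.mem_setOf_eq, not_or, not_not] at hc
    exact hp (by simp [Set.mem_setOf_eq, hc.1, hc.2])
  smul_mem' := by
    intro c f hf
    refine hf.subset fun p hp => ?_
    simp only [Set.mem_setOf_eq] at hp ⊢
    intro h0
    exact hp (by simp [h0])

/-- The ring `𝒜 = (∏_p ℤ/pℤ)/(⊕_p ℤ/pℤ)`. -/
abbrev A : Type := PreA ⧸ nullIdeal

/-- `zetaSum p ks b` is `∑_{b > m₁ > ⋯ > m_n ≥ 1} ∏ mᵢ^{-kᵢ}` in `ℤ/pℤ`. -/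
def zetaSum (p : ℕ) : List ℕ → ℕ → ZMod p
  | [], _ => 1
  | k :: ks, b => ∑ m ∈ Finset.Ico 1 b, ((m : ZMod p)⁻¹) ^ k * zetaSum p ks m

/-- `zetaStarSum p ks b` is `∑_{b > m₁ ≥ ⋯ ≥ m_n ≥ 1} ∏ mᵢ^{-kᵢ}` in `ℤ/pℤ`. -/
def zetaStarSum (p : ℕ) : List ℕ → ℕ → ZMod p
  | [], _ => 1
  | k :: ks, b => ∑ m ∈ Finset.Ico 1 b, ((m : ZMod p)⁻¹) ^ k * zetaStarSum p ks (m + 1)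

/-- The finite multiple zeta value `ζ_𝒜(k₁,…,k_n)`. -/
def zetaA (ks : List ℕ) : A :=
  Ideal.Quotient.mk nullIdeal (fun p => zetaSum p ks p)

/-- The finite multiple zeta-star value `ζ⋆_𝒜(k₁,…,k_n)`. -/
def zetaStarA (ks : List ℕ) : A :=
  Ideal.Quotient.mk nullIdeal (fun p => zetaStarSum p ks p)

/-- `ℋ¹ = ℚ⟨z₁,z₂,…⟩`, the noncommutative polynomial algebra on variables `z_k`, `k ≥ 1`. -/
abbrev H1 : Type := MonoidAlgebra ℚ (FreeMonoid ℕ+)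

/-- The monomial (word) `z_{k₁} ⋯ z_{k_n}` in `ℋ¹`. -/
noncomputable def word (w : List ℕ+) : H1 :=
  MonoidAlgebra.of ℚ (FreeMonoid ℕ+) (FreeMonoid.ofList w)

/-- Shuffle product on words (with values in `ℋ¹`). -/
noncomputable def shuffleW : List ℕ+ → List ℕ+ → H1
  | [], w => word w
  | v, [] => word v
  | k :: v, l :: w => word [k] * shuffleW v (l :: w) + word [l] * shuffleW (k :: v) w
  termination_by v w => v.length + w.length
  decreasing_by all_goals first | (simp; omega) | simp | omega

/-- The shuffle product `ш` on `ℋ¹`, as the bilinear extension of `shuffleW`. -/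
noncomputable def shuffle (x y : H1) : H1 :=
  Finsupp.sum x.coeff fun v c => Finsupp.sum y.coeff fun w c' =>
    (c * c') • shuffleW (FreeMonoid.toList v) (FreeMonoid.toList w)

/-- Harmonic product on words (with values in `ℋ¹`). -/
noncomputable def harmW : List ℕ+ → List ℕ+ → H1
  | [], w => word w
  | v, [] => word v
  | k :: v, l :: w =>
      word [k] * harmW v (l :: w) + word [l] * harmW (k :: v) w
        + word [k + l] * harmW v w
  termination_by v w => v.length + w.length
  decreasing_by all_goals first | (simp; omega) | simp | omega

/-- The harmonic product `*` on `ℋ¹`, as the bilinear extension of `harmW`. -/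
noncomputable def harm (x y : H1) : H1 :=
  Finsupp.sum x.coeff fun v c => Finsupp.sum y.coeff fun w c' =>
    (c * c') • harmW (FreeMonoid.toList v) (FreeMonoid.toList w)

/-- Star-harmonic product on words (with values in `ℋ¹`). -/
noncomputable def harmStarW : List ℕ+ → List ℕ+ → H1
  | [], w => word w
  | v, [] => word v
  | k :: v, l :: w =>
      word [k] * harmStarW v (l :: w) + word [l] * harmStarW (k :: v) w
        - word [k + l] * harmStarW v w
  termination_by v w => v.length + w.length
  decreasing_by all_goals first | (simp; omega) | simp | omega

/-- The product `∗̄` on `ℋ¹`, as the bilinear extension of `harmStarW`. -/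
noncomputable def harmStar (x y : H1) : H1 :=
  Finsupp.sum x.coeff fun v c => Finsupp.sum y.coeff fun w c' =>
    (c * c') • harmStarW (FreeMonoid.toList v) (FreeMonoid.toList w)

/-- The image of a rational number in `𝒜`. -/
def ratA (q : ℚ) : A :=
  Ideal.Quotient.mk nullIdeal (fun p => (q.num : ZMod p) * ((q.den : ZMod p))⁻¹)

/-- The `ℚ`-linear map `Z_𝒜 : ℋ¹ → 𝒜` sending `z_{k₁} ⋯ z_{k_n}` to `ζ_𝒜(k₁,…,k_n)`. -/
noncomputable def ZA (x : H1) : A :=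
  Finsupp.sum x.coeff fun w c => ratA c * zetaA ((FreeMonoid.toList w).map (fun k => (k : ℕ)))

/-- The `ℚ`-linear map `Z̄_𝒜 : ℋ¹ → 𝒜` sending `z_{k₁} ⋯ z_{k_n}` to `ζ⋆_𝒜(k₁,…,k_n)`. -/
noncomputable def ZSA (x : H1) : A :=
  Finsupp.sum x.coeff fun w c => ratA c * zetaStarA ((FreeMonoid.toList w).map (fun k => (k : ℕ)))

/-- Sum of a list of positive integers (equal to the actual sum for nonempty lists). -/
def psum : List ℕ+ → ℕ+
  | [] => 1
  | k :: t => t.foldl (· + ·) k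

/-- The map `d` on words: `d(z_{k₁}⋯z_{k_n}) = ∑_{m} ∑_{0=i₀<⋯<i_m=n}
`z_{k_{i₀+1}+⋯+k_{i₁}} ⋯ z_{k_{i_{m-1}+1}+⋯+k_{i_m}}`. -/
noncomputable def dW (w : List ℕ+) : H1 :=
  ∑ c : Composition w.length, word ((w.splitWrtComposition c).map psum)

/-- `z_a` for a tuple `a = (a₁,…,a_m; b₁,…,b_m; c₁,…,c_n) ∈ I_{m,n}`:
`∑_{σ,τ ∈ S_m} z_{a_{σ(1)}} z_{b_{τ(1)}} ⋯ z_{a_{σ(m)}} z_{b_{τ(m)}} ш z_{c₁} ш ⋯ ш z_{c_n}`. -/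
noncomputable def zTuple {m n : ℕ} (a b : Fin m → ℕ+) (c : Fin n → ℕ+) : H1 :=
  ∑ σ : Equiv.Perm (Fin m), ∑ τ : Equiv.Perm (Fin m),
    (List.ofFn c).foldl (fun w k => shuffle w (word [k]))
      (word ((List.ofFn (fun i => [a (σ i), b (τ i)])).flatten))

/-- The statement `P_{m,n}`: `Z_𝒜(z_a) = Z̄_𝒜(z_a) = 0` for all `a ∈ I_{m,n}`. -/
def Pmn (m n : ℕ) : Prop :=
  ∀ (a b : Fin m → ℕ+) (c : Fin n → ℕ+),
    (∀ i, Odd (a i : ℕ)) → (∀ i, Odd (b i : ℕ)) → (∀ j, Even (c j : ℕ)) →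
    ZA (zTuple a b c) = 0 ∧ ZSA (zTuple a b c) = 0

/-- The list `{c}^{n₀}, a, {c}^{n₁}, b, {c}^{n₂}, …, a, {c}^{n_{2m-1}}, b, {c}^{n_{2m}}`. -/
def bbList (a b c : ℕ) (m : ℕ) (f : Fin (2 * m + 1) → ℕ) : List ℕ :=
  (List.ofFn (fun j : Fin m =>
      List.replicate (f ⟨2 * j.val, by have := j.isLt; omega⟩) c ++ [a]
        ++ List.replicate (f ⟨2 * j.val + 1, by have := j.isLt; omega⟩) c ++ [b])).flatten
    ++ List.replicate (f ⟨2 * m, by omega⟩) c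

/-- `loSum p ks a` is `∑_{a ≤ m₁ ≤ ⋯ ≤ m_n ≤ p-1} ∏ mᵢ^{-kᵢ}` in `ℤ/pℤ`. -/
def loSum (p : ℕ) : List ℕ → ℕ → ZMod p
  | [], _ => 1
  | k :: ks, a => ∑ m ∈ Finset.Ico a p, ((m : ZMod p)⁻¹) ^ k * loSum p ks m

/-- `zetaStarSum` with a continuation applied at the innermost bound. -/
def hiCont (p : ℕ) : List ℕ → ℕ → (ℕ → ZMod p) → ZMod p
  | [], b, g => g b
  | k :: ks, b, g => ∑ m ∈ Finset.Ico 1 b, ((m : ZMod p)⁻¹) ^ k * hiCont p ks (m + 1) g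

lemma hiCont_one (p : ℕ) : ∀ (ks : List ℕ) (b : ℕ),
    hiCont p ks b (fun _ => 1) = zetaStarSum p ks b := by
  intro ks
  induction ks with
  | nil => intro b; simp [hiCont, zetaStarSum]
  | cons k t ih => intro b; simp [hiCont, zetaStarSum, ih]

lemma hiCont_congr (p : ℕ) : ∀ (ks : List ℕ) (b : ℕ) (g g' : ℕ → ZMod p),
    (∀ x, 1 < x → x ≤ b → g x = g' x) → 1 < b → hiCont p ks b g = hiCont p ks b g' := by
  intro ks
  induction ks with
  | nil => intro b g g' h hb; exact h b hb le_rfl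
  | cons k t ih =>
    intro b g g' h hb
    simp only [hiCont]
    refine Finset.sum_congr rfl fun m hm => ?_
    simp only [Finset.mem_Ico] at hm
    rw [ih (m + 1) g g' (fun x hx hxm => h x hx (by omega)) (by omega)]

lemma hiCont_sum (p : ℕ) {α : Type} (s : Finset α) (F : α → ℕ → ZMod p) :
    ∀ (ks : List ℕ) (b : ℕ),
    hiCont p ks b (fun x => ∑ m ∈ s, F m x) = ∑ m ∈ s, hiCont p ks b (F m) := by
  intro ks
  induction ks with
  | nil => intro b; simp [hiCont]
  | cons k t ih =>
    intro b
    simp only [hiCont, ih, Finset.mul_sum]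
    exact Finset.sum_comm

lemma hiCont_smul (p : ℕ) (c : ZMod p) : ∀ (ks : List ℕ) (b : ℕ) (g : ℕ → ZMod p),
    hiCont p ks b (fun x => c * g x) = c * hiCont p ks b g := by
  intro ks
  induction ks with
  | nil => intro b g; simp [hiCont]
  | cons k t ih =>
    intro b g
    simp only [hiCont, ih, Finset.mul_sum]
    refine Finset.sum_congr rfl fun m hm => ?_
    ring

lemma hiCont_append (p : ℕ) (k : ℕ) : ∀ (ks : List ℕ) (b : ℕ) (g : ℕ → ZMod p),
    hiCont p (ks ++ [k]) b g
      = hiCont p ks b (fun b' => ∑ m ∈ Finset.Ico 1 b', ((m : ZMod p)⁻¹) ^ k * g (m + 1)) := by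
  intro ks
  induction ks with
  | nil => intro b g; simp [hiCont]
  | cons j t ih =>
    intro b g
    simp only [List.cons_append, hiCont]
    refine Finset.sum_congr rfl fun m _ => ?_
    exact congrArg (((m : ZMod p)⁻¹) ^ j * ·) (ih (m + 1) g)

lemma loSum_eq (p : ℕ) (hp : 1 < p) : ∀ (ks : List ℕ) (a : ℕ), 1 ≤ a → a < p →
    loSum p ks a = hiCont p ks.reverse p (fun b' => if a < b' then 1 else 0) := by
  intro ks
  induction ks with
  | nil =>
    intro a h1 h2
    simp [loSum, hiCont, h2]
  | cons k t ih =>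
    intro a h1 h2
    rw [List.reverse_cons, hiCont_append]
    have step1 : ∀ b', 1 < b' → b' ≤ p →
        (∑ m ∈ Finset.Ico 1 b', ((m : ZMod p)⁻¹) ^ k * (if a < m + 1 then 1 else 0))
          = ∑ m ∈ Finset.Ico a p,
              (fun (m b'' : ℕ) => ((m : ZMod p)⁻¹) ^ k * (if m < b'' then 1 else 0)) m b' := by
      intro b' hb1 hb2
      simp only
      have e1 : ∀ s : Finset ℕ, ∀ P : ℕ → Prop, ∀ _ : DecidablePred P,
          (∑ m ∈ s, ((m : ZMod p)⁻¹) ^ k * (if P m then 1 else 0))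
            = ∑ m ∈ s.filter P, ((m : ZMod p)⁻¹) ^ k := by
        intro s P hP
        rw [Finset.sum_filter]
        refine Finset.sum_congr rfl fun m hm => ?_
        split <;> simp
      rw [e1 _ _ _, e1 _ _ _]
      congr 1
      ext m
      simp only [Finset.mem_filter, Finset.mem_Ico]
      omega
    rw [hiCont_congr p t.reverse p _ _ step1 hp, hiCont_sum]
    simp only [loSum]
    refine Finset.sum_congr rfl fun m hm => ?_
    simp only [Finset.mem_Ico] at hm
    rw [hiCont_smul, ih m (by omega) (by omega)]

lemma zetaStarSum_neg (p : ℕ) (hp : p.Prime) : ∀ (ks : List ℕ) (a : ℕ), 1 ≤ a → a ≤ p →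
    zetaStarSum p ks a = (-1 : ZMod p) ^ ks.sum * loSum p ks (p + 1 - a) := by
  haveI : Fact p.Prime := ⟨hp⟩
  intro ks
  induction ks with
  | nil => intro a _ _; simp [zetaStarSum, loSum]
  | cons k t ih =>
    intro a h1 h2
    simp only [zetaStarSum, loSum, List.sum_cons, Finset.mul_sum]
    refine Finset.sum_nbij' (i := fun m => p - m) (j := fun m' => p - m')
      (fun m hm => ?_) (fun m' hm' => ?_) (fun m hm => ?_) (fun m' hm' => ?_)
      (fun m hm => ?_)
    · simp only [Finset.mem_Ico] at *; omega
    · simp only [Finset.mem_Ico] at *; omega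
    · simp only [Finset.mem_Ico] at hm; show p - (p - m) = m; omega
    · simp only [Finset.mem_Ico] at hm'; show p - (p - m') = m'; omega
    · simp only [Finset.mem_Ico] at hm
      show ((m : ZMod p)⁻¹) ^ k * zetaStarSum p t (m + 1)
          = (-1 : ZMod p) ^ (k + t.sum)
              * (((((p - m : ℕ)) : ZMod p)⁻¹) ^ k * loSum p t (p - m))
      rw [ih (m + 1) (by omega) (by omega)]
      have e1 : p + 1 - (m + 1) = p - m := by omega
      have e2 : ((p - m : ℕ) : ZMod p) = -(m : ZMod p) := by
        rw [Nat.cast_sub (by omega), ZMod.natCast_self, zero_sub]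
      have e4 : (-(m : ZMod p)⁻¹) ^ k = (-1 : ZMod p) ^ k * ((m : ZMod p)⁻¹) ^ k :=
        neg_pow _ _
      rw [e1, e2, inv_neg, e4, pow_add]
      have e3 : ((-1 : ZMod p)) ^ k * (-1 : ZMod p) ^ k = 1 := by
        rw [← pow_add]; exact Even.neg_one_pow ⟨k, rfl⟩
      calc (m : ZMod p)⁻¹ ^ k * ((-1 : ZMod p) ^ t.sum * loSum p t (p - m))
          = ((-1 : ZMod p) ^ k * (-1 : ZMod p) ^ k) *
              ((m : ZMod p)⁻¹ ^ k * ((-1 : ZMod p) ^ t.sum * loSum p t (p - m))) := by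
            rw [e3, one_mul]
        _ = (-1 : ZMod p) ^ k * (-1 : ZMod p) ^ t.sum *
              ((-1 : ZMod p) ^ k * ((m : ZMod p)⁻¹) ^ k * loSum p t (p - m)) := by ring

lemma zetaStarSum_reverse (p : ℕ) (hp : p.Prime) (ks : List ℕ) :
    zetaStarSum p ks.reverse p = (-1 : ZMod p) ^ ks.sum * zetaStarSum p ks p := by
  haveI : Fact p.Prime := ⟨hp⟩
  have h1 := zetaStarSum_neg p hp ks p (by have := hp.one_lt; omega) le_rfl
  have e1 : p + 1 - p = 1 := by omega
  rw [e1] at h1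
  have h2 := loSum_eq p hp.one_lt ks 1 le_rfl hp.one_lt
  have h3 : hiCont p ks.reverse p (fun b' => if 1 < b' then 1 else 0)
      = zetaStarSum p ks.reverse p := by
    rw [hiCont_congr p ks.reverse p _ (fun _ => 1)
      (fun x hx _ => by simp [hx]) hp.one_lt, hiCont_one]
  rw [h2, h3] at h1
  rw [h1]
  have e3 : ((-1 : ZMod p)) ^ ks.sum * (-1 : ZMod p) ^ ks.sum = 1 := by
    rw [← pow_add]; exact Even.neg_one_pow ⟨ks.sum, rfl⟩
  rw [← mul_assoc, e3, one_mul]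

/-- Reversal formula: `ζ⋆_𝒜(k_n,…,k₁) = (−1)^{k₁+⋯+k_n} ζ⋆_𝒜(k₁,…,k_n)`. -/
theorem zetaStarA_reverse (ks : List ℕ) (hk : ∀ k ∈ ks, 0 < k) :
    zetaStarA ks.reverse = (-1 : A) ^ ks.sum * zetaStarA ks := by
  unfold zetaStarA
  have key : (fun p : Nat.Primes => zetaStarSum p ks.reverse p)
      = ((-1 : PreA) ^ ks.sum * fun p : Nat.Primes => zetaStarSum p ks p) := by
    funext p
    simp only [Pi.mul_apply, Pi.pow_apply, Pi.neg_apply, Pi.one_apply]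
    exact zetaStarSum_reverse p p.2 ks
  rw [key, map_mul, map_pow, map_neg, map_one]
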